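/- arXiv:1804.07957 — 3 statements merged into one kernel-verified Lean document; each statement's English description precedes it below -/
import Mathlib

section
/- Let G be a locally finite group in which every solvable subgroup has derived length at most d, and let H ≤ G and K ⊴ H. Then every solvable subgroup of the section H/K has derived length at most d. -/
open Subgroup
open scoped commutatorElement

/-- Iterated commutator ("derived series") of a subgroup, computed in the ambient group. -/
private def dstep {X : Type*} [Group X] (A : Subgroup X) : ℕ → Subgroup X
  | 0 => A
  | n + 1 => ⁅dstep A n, dstep A n⁆

private lemma map_subtype_derivedSeries {X : Type*} [Group X] (A : Subgroup X) (n : ℕ) :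
    (derivedSeries A n).map A.subtype = dstep A n := by
  induction n with
  | zero =>
      simp [derivedSeries, dstep, ← MonoidHom.range_eq_map, A.range_subtype]
  | succ n ih =>
      rw [derivedSeries_succ, dstep, Subgroup.map_commutator, ih]

private lemma derivedSeries_eq_bot_iff_dstep {X : Type*} [Group X] (A : Subgroup X) (n : ℕ) :
    derivedSeries A n = ⊥ ↔ dstep A n = ⊥ := by
  rw [← map_subtype_derivedSeries, Subgroup.map_eq_bot_iff_of_injective _ A.subtype_injective]

private lemma dstep_map {X Y : Type*} [Group X] [Group Y] (f : X →* Y) (A : Subgroup X) (n : ℕ) :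
    (dstep A n).map f = dstep (A.map f) n := by
  induction n with
  | zero => rfl
  | succ n ih => rw [dstep, Subgroup.map_commutator, ih, dstep]

private lemma dstep_mono {X : Type*} [Group X] {A B : Subgroup X} (h : A ≤ B) (n : ℕ) :
    dstep A n ≤ dstep B n := by
  induction n with
  | zero => exact h
  | succ n ih => exact Subgroup.commutator_mono ih ih

private lemma dstep_iSup {X : Type*} [Group X] {ι : Type*} [Nonempty ι] (f : ι → Subgroup X)
    (hdir : Directed (· ≤ ·) f) (n : ℕ) :
    dstep (⨆ i, f i) n = ⨆ i, dstep (f i) n := by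
  induction n with
  | zero => rfl
  | succ n ih =>
      have hdir' : Directed (· ≤ ·) fun i => dstep (f i) n := fun i j => by
        obtain ⟨k, hik, hjk⟩ := hdir i j
        exact ⟨k, dstep_mono hik n, dstep_mono hjk n⟩
      rw [dstep, ih]
      refine le_antisymm ?_ ?_
      · rw [Subgroup.commutator_def, Subgroup.closure_le]
        rintro x ⟨g, hg, h, hh, rfl⟩
        obtain ⟨i, hgi⟩ := (Subgroup.mem_iSup_of_directed hdir').1 hg
        obtain ⟨j, hhj⟩ := (Subgroup.mem_iSup_of_directed hdir').1 hh
        obtain ⟨k, hik, hjk⟩ := hdir' i j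
        have : ⁅g, h⁆ ∈ dstep (f k) (n + 1) :=
          Subgroup.commutator_mem_commutator (hik hgi) (hjk hhj)
        exact SetLike.le_def.1 (le_iSup (fun i => dstep (f i) (n + 1)) k) this
      · refine iSup_le fun i => ?_
        show ⁅dstep (f i) n, dstep (f i) n⁆ ≤ _
        exact Subgroup.commutator_mono (le_iSup (fun j => dstep (f j) n) i)
          (le_iSup (fun j => dstep (f j) n) i)

/-- In a finite group, a solvable quotient can be "covered" by a solvable subgroup:
there is a solvable subgroup `P` with `P ⊔ N = ⊤`. -/
private lemma exists_solvable_supplement :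
    ∀ (n : ℕ) (S : Type*) [Group S] [Finite S] (N : Subgroup S) [N.Normal],
      Nat.card S ≤ n → IsSolvable (S ⧸ N) →
      ∃ P : Subgroup S, IsSolvable P ∧ P ⊔ N = ⊤ := by
  intro n
  induction n using Nat.strong_induction_on with
  | _ n ih =>
    intro S _ _ N _ hcard hsolv
    classical
    by_cases hP : ∃ P₀ : Subgroup S, P₀ ≠ ⊤ ∧ P₀ ⊔ N = ⊤
    · obtain ⟨P₀, hne, hsup⟩ := hP
      set f : P₀ →* S ⧸ N := (QuotientGroup.mk' N).comp P₀.subtype with hf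
      have hsolv' : IsSolvable (P₀ ⧸ f.ker) :=
        by haveI : Group.IsSolvable (S ⧸ N) := hsolv; exact solvable_of_solvable_injective (QuotientGroup.kerLift_injective f)
      have hlt : Nat.card P₀ < Nat.card S := by
        have hss : (P₀ : Set S) ⊂ Set.univ := by
          rw [Set.ssubset_univ_iff]
          intro hEq
          exact hne (SetLike.ext' (by simpa using hEq))
        calc Nat.card P₀ = (P₀ : Set S).ncard := (Nat.card_coe_set_eq _).symm
          _ < (Set.univ : Set S).ncard := Set.ncard_lt_ncard hss (Set.finite_univ)
          _ = Nat.card S := Set.ncard_univ S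
      obtain ⟨P, hPsolv, hPsup⟩ :=
        ih (Nat.card P₀) (lt_of_lt_of_le hlt hcard) P₀ f.ker le_rfl hsolv'
      refine ⟨P.map P₀.subtype, ?_, ?_⟩
      · have e := P.equivMapOfInjective P₀.subtype P₀.subtype_injective
        haveI : Group.IsSolvable P := hPsolv
        exact solvable_of_surjective (f := e.toMonoidHom) e.surjective
      · have hker : f.ker.map P₀.subtype ≤ N := by
          rintro x ⟨y, hy, rfl⟩
          have : f y = 1 := hy
          simpa [hf, QuotientGroup.eq_one_iff] using this
        have hmap : P.map P₀.subtype ⊔ f.ker.map P₀.subtype = P₀ := by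
          rw [← Subgroup.map_sup, hPsup, ← MonoidHom.range_eq_map, P₀.range_subtype]
        have h1 : P₀ ≤ P.map P₀.subtype ⊔ N := by
          conv_lhs => rw [← hmap]
          exact sup_le le_sup_left (hker.trans le_sup_right)
        rw [eq_top_iff, ← hsup]
        exact sup_le h1 le_sup_right
    · push_neg at hP
      have hN : N ≤ frattini S := by
        refine le_iInf₂ fun M hM => ?_
        by_contra hNM
        have hlt : M < M ⊔ N := lt_of_le_of_ne le_sup_left (fun h => hNM (h ▸ le_sup_right))
        have : M ⊔ N = ⊤ := hM.2 _ hlt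
        exact hP M hM.1 this
      have hnil : Group.IsNilpotent (frattini S) := frattini_nilpotent
      have hsolvF : Group.IsSolvable (frattini S) := inferInstance
      have hsolvQ : Group.IsSolvable (S ⧸ frattini S) := by
        let g : S ⧸ N →* S ⧸ frattini S :=
          QuotientGroup.lift N (QuotientGroup.mk' (frattini S))
            (fun x hx => by simpa [QuotientGroup.eq_one_iff] using hN hx)
        have hg : Function.Surjective g := by
          intro y
          obtain ⟨x, rfl⟩ := QuotientGroup.mk'_surjective (frattini S) y
          exact ⟨QuotientGroup.mk' N x, rfl⟩
        haveI : Group.IsSolvable (S ⧸ N) := hsolv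
        exact solvable_of_surjective hg
      have : Group.IsSolvable S := by
        refine solvable_of_ker_le_range (frattini S).subtype
          (QuotientGroup.mk' (frattini S)) ?_
        rw [QuotientGroup.ker_mk', (frattini S).range_subtype]
      exact ⟨⊤, (inferInstance : Group.IsSolvable (⊤ : Subgroup S)), top_sup_eq N⟩

/-- If `G` is locally finite and every solvable subgroup of `G` has derived length at most `d`,
then every solvable subgroup of any section `H/K` of `G` has derived length at most `d`. -/
theorem stmt_1 {G : Type*} [Group G]
    (hLF : ∀ s : Finset G, Finite (Subgroup.closure (s : Set G)))
    (d : ℕ)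
    (hG : ∀ S : Subgroup G, IsSolvable S → derivedSeries S d = ⊥)
    (H : Subgroup G) (K : Subgroup H) [K.Normal]
    (T : Subgroup (H ⧸ K)) (hT : IsSolvable T) :
    derivedSeries T d = ⊥ := by
  have key : ∀ (s' : Finset (H ⧸ K)), IsSolvable (closure (s' : Set (H ⧸ K))) →
      dstep (closure (s' : Set (H ⧸ K))) d = ⊥ := by
    intro s' hsolv
    classical
    set T' : Subgroup (H ⧸ K) := closure (s' : Set (H ⧸ K)) with hT'
    have hsec : ∀ q : H ⧸ K, ∃ h : H, QuotientGroup.mk' K h = q :=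
      QuotientGroup.mk'_surjective K
    choose sec hsec' using hsec
    set t : Finset H := s'.image sec with ht
    have himage : (QuotientGroup.mk' K) '' (t : Set H) = (s' : Set (H ⧸ K)) := by
      ext q
      simp only [ht, Finset.coe_image, Set.mem_image]
      constructor
      · rintro ⟨h, ⟨q', hq', rfl⟩, rfl⟩
        rw [hsec' q']; exact hq'
      · intro hq; exact ⟨sec q, ⟨q, hq, rfl⟩, hsec' q⟩
    set S₀ : Subgroup H := closure (t : Set H) with hS₀
    have hfin : Finite S₀ := by
      have hmap : S₀.map H.subtype = closure ((t.image H.subtype : Finset G) : Set G) := by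
        rw [hS₀, MonoidHom.map_closure]
        congr 1
        simp [Finset.coe_image]
      have hfin' : Finite (S₀.map H.subtype) := by
        rw [hmap]; exact hLF _
      exact Finite.of_equiv _ (S₀.equivMapOfInjective H.subtype H.subtype_injective).symm.toEquiv
    set φ : S₀ →* H ⧸ K := (QuotientGroup.mk' K).comp S₀.subtype with hφ
    have hrange : φ.range = T' := by
      rw [hφ, MonoidHom.range_comp, S₀.range_subtype, hS₀, MonoidHom.map_closure, himage, hT']
    have hsolvq : IsSolvable (S₀ ⧸ φ.ker) := by
      have e := QuotientGroup.quotientKerEquivRange φ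
      have : Group.IsSolvable φ.range := by rw [hrange]; exact hsolv
      exact solvable_of_solvable_injective (f := e.toMonoidHom) e.injective
    obtain ⟨P, hPsolv, hPsup⟩ :=
      exists_solvable_supplement (Nat.card S₀) S₀ φ.ker le_rfl hsolvq
    set ψ : S₀ →* G := H.subtype.comp S₀.subtype with hψ
    have hψinj : Function.Injective ψ :=
      H.subtype_injective.comp S₀.subtype_injective
    have hPG : IsSolvable (P.map ψ) :=
      haveI : Group.IsSolvable P := hPsolv
      solvable_of_surjective (f := (P.equivMapOfInjective ψ hψinj).toMonoidHom)
        (P.equivMapOfInjective ψ hψinj).surjective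
    have hPd : dstep P d = ⊥ := by
      have h1 : derivedSeries (P.map ψ) d = ⊥ := hG _ hPG
      have h2 : dstep (P.map ψ) d = ⊥ := (derivedSeries_eq_bot_iff_dstep _ d).1 h1
      rw [← dstep_map] at h2
      exact (Subgroup.map_eq_bot_iff_of_injective _ hψinj).1 h2
    have hmapP : P.map φ = T' := by
      have h1 : P.map φ ⊔ φ.ker.map φ = φ.range := by
        rw [← Subgroup.map_sup, hPsup, ← MonoidHom.range_eq_map]
      have h2 : φ.ker.map φ = ⊥ := by
        rw [Subgroup.map_eq_bot_iff]
      rw [h2, sup_bot_eq] at h1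
      rw [h1, hrange]
    rw [← hmapP, ← dstep_map, hPd]
    exact Subgroup.map_bot φ
  classical
  rw [Subgroup.eq_bot_iff_forall]
  intro x hx
  have hds : ∀ n, derivedSeries T n = dstep (⊤ : Subgroup T) n := by
    intro n
    induction n with
    | zero => rfl
    | succ n ih => rw [derivedSeries_succ, ih]; rfl
  have htop : (⊤ : Subgroup T) = ⨆ s : Finset T, closure (s : Set T) := by
    refine le_antisymm (fun y _ => ?_) le_top
    have hy : y ∈ closure (({y} : Finset T) : Set T) := by
      apply Subgroup.subset_closure; simp
    exact SetLike.le_def.1 (le_iSup (fun s : Finset T => closure (s : Set T)) {y}) hy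
  have hdir : Directed (· ≤ ·) fun s : Finset T => closure (s : Set T) := by
    intro s₁ s₂
    exact ⟨s₁ ∪ s₂, Subgroup.closure_mono (by simp [Finset.coe_union]),
      Subgroup.closure_mono (by simp [Finset.coe_union])⟩
  have hx' : x ∈ ⨆ s : Finset T, dstep (closure (s : Set T)) d := by
    rw [← dstep_iSup _ hdir, ← htop, ← hds]
    exact hx
  have hdir' : Directed (· ≤ ·) fun s : Finset T => dstep (closure (s : Set T)) d := by
    intro s₁ s₂
    obtain ⟨s₃, h₁, h₂⟩ := hdir s₁ s₂
    exact ⟨s₃, dstep_mono h₁ d, dstep_mono h₂ d⟩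
  obtain ⟨s, hxs⟩ := (Subgroup.mem_iSup_of_directed hdir').1 hx'
  set s' : Finset (H ⧸ K) := s.image T.subtype with hs'
  have hmapc : (closure (s : Set T)).map T.subtype = closure (s' : Set (H ⧸ K)) := by
    rw [MonoidHom.map_closure]
    congr 1
    simp [hs', Finset.coe_image]
  have hsolv' : IsSolvable (closure (s' : Set (H ⧸ K))) := by
    rw [← hmapc]
    haveI : Group.IsSolvable T := hT
    exact solvable_of_surjective
      (f := ((closure (s : Set T)).equivMapOfInjective T.subtype T.subtype_injective).toMonoidHom)
      ((closure (s : Set T)).equivMapOfInjective T.subtype T.subtype_injective).surjective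
  have hkey := key s' hsolv'
  have hbot : dstep (closure (s : Set T)) d = ⊥ := by
    have h2 : (dstep (closure (s : Set T)) d).map T.subtype = ⊥ := by
      rw [dstep_map, hmapc, hkey]
    exact (Subgroup.map_eq_bot_iff_of_injective _ T.subtype_injective).1 h2
  rw [hbot] at hxs
  simpa using hxs
end

section
/- Let B be a finite cyclic group of automorphisms of a locally finite group K, with |B| a π-number, and let S be a B-invariant normal solvable π'-subgroup of K such that only finitely many primes divide orders of elements of S. Then C_{K/S}(B) is the image of C_K(B) under the projection K → K/S. -/
namespace Stmt4Aux

universe u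

variable {G : Type*} [Group G]

/-- Twisted partial products `t * α t * α² t * ⋯ * α^{j-1} t`. -/
def tw (α : MulAut G) (t : G) : ℕ → G
  | 0 => 1
  | j + 1 => tw α t j * (α ^ j) t

theorem pow_compat {G H : Type*} [Group G] [Group H] (φ : G →* H) (α : MulAut G)
    (β : MulAut H) (h : ∀ g, φ (α g) = β (φ g)) :
    ∀ (j : ℕ) (g : G), φ ((α ^ j) g) = (β ^ j) (φ g) := by
  intro j
  induction j with
  | zero => intro g; simp [pow_zero, MulAut.one_apply]
  | succ j ih =>
    intro g
    rw [pow_succ, MulAut.mul_apply, ih, h, pow_succ, MulAut.mul_apply]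

theorem tw_map {G H : Type*} [Group G] [Group H] (φ : G →* H) (α : MulAut G)
    (β : MulAut H) (h : ∀ g, φ (α g) = β (φ g)) (t : G) :
    ∀ j : ℕ, φ (tw α t j) = tw β (φ t) j := by
  intro j
  induction j with
  | zero => simp [tw]
  | succ j ih => rw [tw, map_mul, ih, pow_compat φ α β h, tw]

theorem tw_conj (α : MulAut G) (t s : G) :
    ∀ j : ℕ, tw α (s⁻¹ * t * α s) j = s⁻¹ * tw α t j * (α ^ j) s := by
  intro j
  induction j with
  | zero => simp [tw, pow_zero, MulAut.one_apply]
  | succ j ih =>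
    have h1 : (α ^ j) (s⁻¹ * t * α s) = ((α ^ j) s)⁻¹ * (α ^ j) t * (α ^ (j + 1)) s := by
      rw [map_mul, map_mul, map_inv, pow_succ, MulAut.mul_apply]
    rw [tw, ih, h1, tw]
    group

/-- Abelian case of the fixed-point lifting lemma. -/
theorem ab_case {S : Type*} [CommGroup S] [Finite S] (α : MulAut S) (n : ℕ)
    (hcop : Nat.Coprime n (Nat.card S)) (t : S) (ht : tw α t n = 1) :
    ∃ s, t * α s = s := by
  have key : ∀ j, α (tw α t j) = t⁻¹ * tw α t (j + 1) := by
    intro j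
    induction j with
    | zero => simp [tw, pow_zero, MulAut.one_apply]
    | succ j ih =>
      rw [tw, map_mul, ih]
      have : α ((α ^ j) t) = (α ^ (j + 1)) t := by
        rw [pow_succ', MulAut.mul_apply]
      rw [this]
      show _ = t⁻¹ * (tw α t (j+1) * (α ^ (j+1)) t)
      rw [mul_assoc]
  set u := ∏ j ∈ Finset.range n, tw α t j with hu
  have h1 : α u = t⁻¹ ^ n * u := by
    rw [hu, map_prod]
    simp_rw [key]
    rw [Finset.prod_mul_distrib, Finset.prod_const, Finset.card_range]
    congr 1
    have h2 := Finset.prod_range_succ' (fun j => tw α t j) n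
    have h3 := Finset.prod_range_succ (fun j => tw α t j) n
    rw [h3] at h2
    simpa [tw, ht] using h2.symm
  have h2 : t ^ n = u * (α u)⁻¹ := by
    rw [h1, mul_inv, inv_pow, inv_inv, mul_comm, mul_assoc, inv_mul_cancel, mul_one]
  obtain ⟨a, b, hab⟩ : ∃ a b : ℤ, (n : ℤ) * a + (Nat.card S : ℤ) * b = 1 := by
    refine ⟨Nat.gcdA n (Nat.card S), Nat.gcdB n (Nat.card S), ?_⟩
    have := Nat.gcd_eq_gcd_ab n (Nat.card S)
    rw [hcop] at this
    exact_mod_cast this.symm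
  refine ⟨u ^ a, ?_⟩
  have hc : t ^ (Nat.card S : ℤ) = 1 := by
    rw [zpow_natCast, pow_card_eq_one']
  have ht1 : t = (t ^ n) ^ a := by
    calc t = t ^ (1 : ℤ) := (zpow_one t).symm
    _ = t ^ ((n : ℤ) * a + (Nat.card S : ℤ) * b) := by rw [hab]
    _ = (t ^ (n : ℤ)) ^ a * (t ^ (Nat.card S : ℤ)) ^ b := by
        rw [zpow_add, zpow_mul, zpow_mul]
    _ = (t ^ n) ^ a := by rw [hc, one_zpow, mul_one, zpow_natCast]
  calc t * α (u ^ a) = (t ^ n) ^ a * α (u ^ a) := by rw [← ht1]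
  _ = (u * (α u)⁻¹) ^ a * (α u) ^ a := by rw [h2, map_zpow]
  _ = u ^ a * ((α u)⁻¹) ^ a * (α u) ^ a := by rw [mul_zpow]
  _ = u ^ a * ((α u) ^ a)⁻¹ * (α u) ^ a := by rw [inv_zpow]
  _ = u ^ a := by rw [mul_assoc, inv_mul_cancel, mul_one]

/-- Solvable case of the fixed-point lifting lemma, by induction on the order. -/
theorem solv_case : ∀ (N : ℕ) (S : Type u) [Group S] [Finite S] [Group.IsSolvable S],
    Nat.card S ≤ N → ∀ (α : MulAut S) (n : ℕ), (∀ s, (α ^ n) s = s) →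
    Nat.Coprime n (Nat.card S) → ∀ t : S, tw α t n = 1 → ∃ s, t * α s = s := by
  intro N
  induction N with
  | zero =>
    intro S _ _ _ hN _ _ _ _ _ _
    exact absurd (Nat.card_pos (α := S)) (by omega)
  | succ N ih =>
    intro S _ _ _ hN α n hn hcop t ht
    by_cases hc : ∀ a b : S, a * b = b * a
    · let _ : CommGroup S := { ‹Group S› with mul_comm := hc }
      exact ab_case α n hcop t ht
    · -- the commutator subgroup is proper
      have hne : commutator S ≠ ⊤ := by
        intro h
        have hder : ∀ m, derivedSeries S m = ⊤ := by
          intro m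
          induction m with
          | zero => rfl
          | succ m ihm => rw [derivedSeries_succ, ihm]; exact h
        obtain ⟨m, hm⟩ := Group.IsSolvable.solvable (G := S)
        rw [hder m] at hm
        refine hc fun a b => ?_
        have ha : a ∈ (⊥ : Subgroup S) := hm ▸ Subgroup.mem_top a
        have hb : b ∈ (⊥ : Subgroup S) := hm ▸ Subgroup.mem_top b
        rw [Subgroup.mem_bot] at ha hb
        rw [ha, hb]
      have hlt : Nat.card ↥(commutator S) < Nat.card S := by
        have heq := Subgroup.card_eq_card_quotient_mul_card_subgroup (commutator S)
        have hpos : 0 < Nat.card ↥(commutator S) := Nat.card_pos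
        have hq1 : Nat.card (S ⧸ commutator S) ≠ 1 := fun h1 =>
          hne (Subgroup.index_eq_one.mp h1)
        have hq0 : Nat.card (S ⧸ commutator S) ≠ 0 := by
          intro h0
          have h2 := Nat.card_pos (α := S)
          rw [heq, h0, zero_mul] at h2
          exact lt_irrefl 0 h2
        calc Nat.card ↥(commutator S) = 1 * Nat.card ↥(commutator S) := (one_mul _).symm
        _ < Nat.card (S ⧸ commutator S) * Nat.card ↥(commutator S) :=
            (Nat.mul_lt_mul_right hpos).mpr (by omega)
        _ = Nat.card S := heq.symm
      -- pass to the abelianization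
      set αQ : MulAut (Abelianization S) := MulEquiv.abelianizationCongr α with hαQ
      have hcompatQ : ∀ g : S, Abelianization.of (α g) = αQ (Abelianization.of g) :=
        fun g => (abelianizationCongr_of α g).symm
      have hcopQ : Nat.Coprime n (Nat.card (Abelianization S)) :=
        hcop.coprime_dvd_right (Subgroup.card_quotient_dvd_card (commutator S))
      have htQ : tw αQ (Abelianization.of t) n = 1 := by
        rw [← tw_map Abelianization.of α αQ hcompatQ t n, ht, map_one]
      obtain ⟨sbar, hsbar⟩ := ab_case αQ n hcopQ (Abelianization.of t) htQ
      obtain ⟨s₁, hs₁⟩ := QuotientGroup.mk_surjective (sbar : S ⧸ commutator S)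
      have hs₁' : Abelianization.of s₁ = sbar := hs₁
      set t' := s₁⁻¹ * t * α s₁ with ht'def
      have ht' : t' ∈ commutator S := by
        have : (QuotientGroup.mk t' : S ⧸ commutator S) = 1 := by
          show Abelianization.of t' = 1
          rw [ht'def, map_mul, map_mul, map_inv, hcompatQ, hs₁', mul_assoc, hsbar,
            inv_mul_cancel]
        exact (QuotientGroup.eq_one_iff t').mp this
      have hmap : Subgroup.map (α : S →* S) (commutator S) = commutator S := by
        rw [commutator_def, Subgroup.map_commutator,
          Subgroup.map_top_of_surjective _ α.surjective]
      set α' : MulAut ↥(commutator S) :=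
        (MulEquiv.subgroupMap α (commutator S)).trans (MulEquiv.subgroupCongr hmap) with hα'def
      have hcompat' : ∀ y : ↥(commutator S),
          (commutator S).subtype (α' y) = α ((commutator S).subtype y) := fun y => rfl
      have hn' : ∀ y, (α' ^ n) y = y := by
        intro y
        apply Subtype.ext
        have := pow_compat (commutator S).subtype α' α hcompat' n y
        simpa [hn] using this
      have hcop' : Nat.Coprime n (Nat.card ↥(commutator S)) :=
        hcop.coprime_dvd_right (Subgroup.card_subgroup_dvd_card _)
      set t'' : ↥(commutator S) := ⟨t', ht'⟩ with ht''def
      have htw'' : tw α' t'' n = 1 := by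
        apply (commutator S).subtype_injective
        rw [tw_map (commutator S).subtype α' α hcompat' t'' n, map_one]
        show tw α t' n = 1
        rw [ht'def, tw_conj, ht, hn s₁]
        group
      obtain ⟨s₂, hs₂⟩ := ih ↥(commutator S) (by omega) α' n hn' hcop' t'' htw''
      refine ⟨s₁ * (s₂ : S), ?_⟩
      have hval : t' * α (s₂ : S) = (s₂ : S) := by
        have := congrArg (commutator S).subtype hs₂
        rw [map_mul, hcompat'] at this
        exact this
      have step : t * α s₁ * α (s₂ : S) = s₁ * (t' * α (s₂ : S)) := by
        rw [ht'def]; group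
      rw [map_mul, ← mul_assoc, step, hval]

theorem fix_zpow {K : Type*} [Group K] (β : MulAut K) (x : K) (h : β x = x) :
    ∀ m : ℤ, (β ^ m) x = x := by
  have hn : ∀ j : ℕ, (β ^ j) x = x := by
    intro j
    induction j with
    | zero => simp [pow_zero, MulAut.one_apply]
    | succ j ihj => rw [pow_succ, MulAut.mul_apply, h, ihj]
  intro m
  cases m with
  | ofNat j => simpa using hn j
  | negSucc j =>
    rw [zpow_negSucc]
    have := hn (j + 1)
    calc ((β ^ (j + 1))⁻¹) x = (β ^ (j + 1))⁻¹ ((β ^ (j + 1)) x) := by rw [this]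
    _ = ((β ^ (j + 1))⁻¹ * β ^ (j + 1)) x := by rw [MulAut.mul_apply]
    _ = x := by rw [inv_mul_cancel, MulAut.one_apply]

end Stmt4Aux

open Stmt4Aux in
/-- Coprime-action lifting of centralizers (locally finite case): if `B` is a finite cyclic
group of automorphisms of a locally finite group `K` with `|B|` a `π`-number, and `S` is a
`B`-invariant normal solvable `π'`-subgroup of `K` such that only finitely many primes divide
orders of elements of `S`, then `C_{K/S}(B)` is the image of `C_K(B)` under `K → K/S`. -/
theorem stmt_4 {K : Type*} [Group K]
    (hLF : ∀ s : Finset K, Finite (Subgroup.closure (s : Set K)))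
    (π : Set ℕ)
    (B : Subgroup (MulAut K)) [Finite B] (hcyc : IsCyclic B)
    (hBpi : ∀ q : ℕ, q.Prime → q ∣ Nat.card B → q ∈ π)
    (S : Subgroup K) [S.Normal] (hsolv : IsSolvable S)
    (hSinv : ∀ b ∈ B, Subgroup.map (MulEquiv.toMonoidHom b) S = S)
    (hSpi' : ∀ x ∈ S, ∀ q : ℕ, q.Prime → q ∣ orderOf x → q ∉ π)
    (hfin : {q : ℕ | q.Prime ∧ ∃ x ∈ S, q ∣ orderOf x}.Finite) :
    {x : K ⧸ S | ∀ b ∈ B, ∀ k : K, (QuotientGroup.mk k : K ⧸ S) = x →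
        (QuotientGroup.mk (b k) : K ⧸ S) = x}
      = QuotientGroup.mk '' {k : K | ∀ b ∈ B, b k = k} := by
  haveI := hcyc
  obtain ⟨βB, hβgen⟩ := IsCyclic.exists_generator (α := B)
  set β : MulAut K := (βB : MulAut K) with hβdef
  have hβmem : β ∈ B := βB.2
  set n := Nat.card B with hndef
  have hβn : ∀ y : K, (β ^ n) y = y := by
    intro y
    have h1 : (βB : B) ^ n = 1 := pow_card_eq_one'
    have h2 : β ^ n = ((βB ^ n : B) : MulAut K) := by
      rw [SubgroupClass.coe_pow]
    rw [h2, h1, OneMemClass.coe_one, MulAut.one_apply]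
  ext x
  simp only [Set.mem_setOf_eq, Set.mem_image]
  constructor
  · intro hx
    obtain ⟨k, rfl⟩ := QuotientGroup.mk_surjective x
    have ht : k⁻¹ * β k ∈ S :=
      (QuotientGroup.eq (s := S)).mp ((hx β hβmem k rfl).symm)
    set t : K := k⁻¹ * β k with htdef
    set X : Set K := Set.range (fun b : B => (b : MulAut K) t) with hXdef
    have hXfin : X.Finite := Set.finite_range _
    set S₀ : Subgroup K := Subgroup.closure X with hS₀def
    haveI hfinS₀ : Finite ↥S₀ := by
      have h := hLF hXfin.toFinset
      rwa [Set.Finite.coe_toFinset] at h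
    have htX : t ∈ X := ⟨1, by
      show ((1 : B) : MulAut K) t = t
      rw [OneMemClass.coe_one, MulAut.one_apply]⟩
    have htS₀ : t ∈ S₀ := Subgroup.subset_closure htX
    have hS₀S : S₀ ≤ S := by
      rw [hS₀def, Subgroup.closure_le]
      rintro _ ⟨b, rfl⟩
      have hb : ((b : MulAut K)) t ∈ Subgroup.map ((b : MulAut K).toMonoidHom) S :=
        ⟨t, ht, rfl⟩
      rwa [hSinv b b.2] at hb
    have hXinv : (⇑β) '' X = X := by
      ext y
      constructor
      · rintro ⟨_, ⟨b, rfl⟩, rfl⟩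
        refine ⟨βB * b, ?_⟩
        show ((βB * b : B) : MulAut K) t = β ((b : MulAut K) t)
        rw [Subgroup.coe_mul, MulAut.mul_apply]
      · rintro ⟨b, rfl⟩
        refine ⟨((βB⁻¹ * b : B) : MulAut K) t, ⟨βB⁻¹ * b, rfl⟩, ?_⟩
        show β (((βB⁻¹ * b : B) : MulAut K) t) = (b : MulAut K) t
        rw [Subgroup.coe_mul, ← MulAut.mul_apply, Subgroup.coe_inv, ← hβdef,
          ← mul_assoc, mul_inv_cancel, one_mul]
    have hmapS₀ : Subgroup.map (β : K →* K) S₀ = S₀ := by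
      rw [hS₀def, MonoidHom.map_closure]
      exact congrArg Subgroup.closure hXinv
    set α : MulAut ↥S₀ :=
      (MulEquiv.subgroupMap β S₀).trans (MulEquiv.subgroupCongr hmapS₀) with hαdef
    have hcompat : ∀ y : ↥S₀, S₀.subtype (α y) = β (S₀.subtype y) := fun y => rfl
    have hnα : ∀ y, (α ^ n) y = y := by
      intro y
      apply Subtype.ext
      have h := pow_compat S₀.subtype α β hcompat n y
      simpa [hβn] using h
    have hcop : Nat.Coprime n (Nat.card ↥S₀) := by
      by_contra hg
      obtain ⟨p, hp, hpd⟩ := Nat.exists_prime_and_dvd hg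
      have hpn : p ∣ n := hpd.trans (Nat.gcd_dvd_left _ _)
      have hpc : p ∣ Nat.card ↥S₀ := hpd.trans (Nat.gcd_dvd_right _ _)
      haveI := Fact.mk hp
      obtain ⟨g, hg'⟩ := exists_prime_orderOf_dvd_card' (G := ↥S₀) p hpc
      have horder : orderOf (g : K) = p := by
        rw [← hg']
        exact orderOf_injective S₀.subtype S₀.subtype_injective g
      exact hSpi' (g : K) (hS₀S g.2) p hp (horder ▸ dvd_refl p) (hBpi p hp hpn)
    have hk : ∀ j : ℕ, (β ^ j) k = k * tw β t j := by
      intro j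
      induction j with
      | zero => simp [tw, MulAut.one_apply]
      | succ j ihj =>
        have hβk : β k = k * t := by rw [htdef, ← mul_assoc, mul_inv_cancel, one_mul]
        rw [pow_succ, MulAut.mul_apply, hβk, map_mul, ihj]
        show _ = k * (tw β t j * (β ^ j) t)
        rw [← mul_assoc]
    have htwn : tw β t n = 1 := by
      have h := hk n
      rw [hβn k] at h
      exact (left_eq_mul.mp h).symm ▸ rfl
    set t₀ : ↥S₀ := ⟨t, htS₀⟩ with ht₀def
    have htw0 : tw α t₀ n = 1 := by
      apply S₀.subtype_injective
      rw [tw_map S₀.subtype α β hcompat t₀ n, map_one]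
      exact htwn
    haveI : Group.IsSolvable ↥S := hsolv
    haveI : Group.IsSolvable ↥S₀ :=
      solvable_of_solvable_injective (Subgroup.inclusion_injective hS₀S)
    obtain ⟨s₀, hs₀⟩ := solv_case (Nat.card ↥S₀) ↥S₀ le_rfl α n hnα hcop t₀ htw0
    have hval : t * β (s₀ : K) = (s₀ : K) := by
      have h := congrArg S₀.subtype hs₀
      rw [map_mul, hcompat] at h
      exact h
    have hfixβ : β (k * (s₀ : K)) = k * (s₀ : K) := by
      have hβk : β k = k * t := by rw [htdef, ← mul_assoc, mul_inv_cancel, one_mul]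
      rw [map_mul, hβk, mul_assoc, hval]
    refine ⟨k * (s₀ : K), ?_, ?_⟩
    · intro b hb
      obtain ⟨m, hm⟩ := hβgen ⟨b, hb⟩
      have hm' : βB ^ m = (⟨b, hb⟩ : B) := hm
      have hbm : b = ((βB ^ m : B) : MulAut K) := by rw [hm']
      rw [hbm, SubgroupClass.coe_zpow]
      exact fix_zpow β _ hfixβ m
    · show QuotientGroup.mk (k * (s₀ : K)) = QuotientGroup.mk k
      have h1 : (QuotientGroup.mk ((s₀ : K)) : K ⧸ S) = 1 :=
        (QuotientGroup.eq_one_iff _).mpr (hS₀S s₀.2)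
      rw [QuotientGroup.mk_mul, h1, mul_one]
  · rintro ⟨k₀, hk₀, rfl⟩
    intro b hb k hkk
    have h1 : k⁻¹ * k₀ ∈ S := (QuotientGroup.eq (s := S)).mp hkk
    have h2 : (b k)⁻¹ * k₀ ∈ S := by
      have h3 : b (k⁻¹ * k₀) ∈ Subgroup.map b.toMonoidHom S := ⟨k⁻¹ * k₀, h1, rfl⟩
      rw [hSinv b hb] at h3
      rw [map_mul, map_inv, hk₀ b hb] at h3
      exact h3
    exact (QuotientGroup.eq (s := S)).mpr h2
end

section
/- Let H be a group in which every solvable subgroup has derived length at most d (H is 'constrained'), and suppose H is locally finite. Then H has a unique maximal normal locally solvable subgroup R(H), and R(H) is solvable of derived length at most d. -/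
/-- A group is locally solvable if every finitely generated subgroup is solvable. -/
def IsLocallySolvable (G : Type*) [Group G] : Prop :=
  ∀ s : Finset G, IsSolvable (Subgroup.closure (s : Set G))

section Aux

open Subgroup
open scoped commutatorElement

variable {G : Type*} [Group G]

/-- Monotonicity of the image of the derived series of a subgroup. -/
lemma derivedSeries_map_subtype_mono {K L : Subgroup G} (h : K ≤ L) (n : ℕ) :
    (derivedSeries K n).map K.subtype ≤ (derivedSeries L n).map L.subtype := by
  have h1 := map_derivedSeries_le_derivedSeries (Subgroup.inclusion h) n
  have h2 := Subgroup.map_mono (f := L.subtype) h1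
  rwa [Subgroup.map_map, Subgroup.subtype_comp_inclusion] at h2

/-- Every element of the derived series lies in the image of the derived series of a
finitely generated subgroup. -/
lemma mem_derivedSeries_fg [DecidableEq G] :
    ∀ (n : ℕ) (x : G), x ∈ derivedSeries G n →
      ∃ s : Finset G, x ∈ (derivedSeries (Subgroup.closure (s : Set G)) n).map
        (Subgroup.closure (s : Set G)).subtype := by
  intro n
  induction n with
  | zero =>
    intro x _
    exact ⟨{x}, ⟨⟨x, Subgroup.subset_closure (by simp)⟩, trivial, rfl⟩⟩
  | succ n ih =>
    intro x hx
    rw [derivedSeries_succ, Subgroup.commutator_def] at hx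
    refine Subgroup.closure_induction ?_ ?_ ?_ ?_ hx
    · rintro z ⟨a, ha, b, hb, rfl⟩
      obtain ⟨s, a', ha', rfl⟩ := ih a ha
      obtain ⟨t, b', hb', rfl⟩ := ih b hb
      refine ⟨s ∪ t, ?_⟩
      have hs : Subgroup.closure (s : Set G) ≤ Subgroup.closure ((s ∪ t : Finset G) : Set G) :=
        Subgroup.closure_mono (by simp [Finset.coe_union])
      have ht : Subgroup.closure (t : Set G) ≤ Subgroup.closure ((s ∪ t : Finset G) : Set G) :=
        Subgroup.closure_mono (by simp [Finset.coe_union])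
      obtain ⟨a'', ha'', ha3⟩ := derivedSeries_map_subtype_mono hs n ⟨a', ha', rfl⟩
      obtain ⟨b'', hb'', hb3⟩ := derivedSeries_map_subtype_mono ht n ⟨b', hb', rfl⟩
      refine ⟨⁅a'', b''⁆, ?_, ?_⟩
      · rw [derivedSeries_succ]
        exact Subgroup.commutator_mem_commutator ha'' hb''
      · rw [← ha3, ← hb3]
        exact map_commutatorElement _ _ _
    · exact ⟨∅, Subgroup.one_mem _⟩
    · rintro a b _ _ ⟨s, hs⟩ ⟨t, ht⟩
      refine ⟨s ∪ t, ?_⟩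
      have hsu : Subgroup.closure (s : Set G) ≤ Subgroup.closure ((s ∪ t : Finset G) : Set G) :=
        Subgroup.closure_mono (by simp [Finset.coe_union])
      have htu : Subgroup.closure (t : Set G) ≤ Subgroup.closure ((s ∪ t : Finset G) : Set G) :=
        Subgroup.closure_mono (by simp [Finset.coe_union])
      exact Subgroup.mul_mem _ (derivedSeries_map_subtype_mono hsu _ hs)
        (derivedSeries_map_subtype_mono htu _ ht)
    · rintro a _ ⟨s, hs⟩
      exact ⟨s, Subgroup.inv_mem _ hs⟩

/-- A solvable group is locally solvable. -/
lemma IsSolvable.isLocallySolvable (h : IsSolvable G) : IsLocallySolvable G := by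
  intro s
  haveI : Group.IsSolvable G := h
  exact (inferInstance : Group.IsSolvable (Subgroup.closure (s : Set G)))

end Aux

section Main

variable {H : Type*} [Group H]

/-- In a constrained group, every locally solvable subgroup has trivial `d`-th derived
subgroup. -/
lemma locallySolvable_derivedSeries
    (d : ℕ) (hcon : ∀ S : Subgroup H, IsSolvable S → derivedSeries S d = ⊥)
    (K : Subgroup H) (hK : IsLocallySolvable K) : derivedSeries K d = ⊥ := by
  classical
  rw [eq_bot_iff]
  intro x hx
  obtain ⟨s, x', hx', hxeq⟩ := mem_derivedSeries_fg d x hx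
  haveI hT : Group.IsSolvable (Subgroup.closure (s : Set K)) := hK s
  let e := (Subgroup.closure (s : Set K)).equivMapOfInjective K.subtype K.subtype_injective
  haveI : Group.IsSolvable ((Subgroup.closure (s : Set K)).map K.subtype) :=
    solvable_of_surjective (f := e.toMonoidHom) e.surjective
  have hbot : derivedSeries ((Subgroup.closure (s : Set K)).map K.subtype) d = ⊥ :=
    hcon _ (inferInstance : Group.IsSolvable _)
  have hmap := map_derivedSeries_le_derivedSeries e.toMonoidHom d
  rw [hbot, le_bot_iff] at hmap
  have hmem : e x' ∈ Subgroup.map e.toMonoidHom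
      (derivedSeries (Subgroup.closure (s : Set K)) d) := ⟨x', hx', rfl⟩
  rw [hmap, Subgroup.mem_bot] at hmem
  have hx1 : x' = 1 := e.injective (hmem.trans (map_one e).symm)
  rw [Subgroup.mem_bot, ← hxeq, hx1]
  simp

/-- The join of two normal solvable subgroups is solvable. -/
lemma isSolvable_sup {N₁ N₂ : Subgroup H} (h₁ : N₁.Normal) (h₂ : N₂.Normal)
    (hs₁ : IsSolvable N₁) (hs₂ : IsSolvable N₂) : IsSolvable ↥(N₁ ⊔ N₂) := by
  haveI := h₁
  haveI := h₂
  set J := N₁ ⊔ N₂ with hJ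
  haveI hN : (N₁.subgroupOf J).Normal := h₁.subgroupOf J
  haveI : Group.IsSolvable N₁ := hs₁
  haveI : Group.IsSolvable N₂ := hs₂
  haveI : Group.IsSolvable (N₁.subgroupOf J) :=
    solvable_of_solvable_injective (f := (Subgroup.subgroupOfEquivOfLe
      (le_sup_left : N₁ ≤ J)).toMonoidHom) (Subgroup.subgroupOfEquivOfLe _).injective
  -- quotient is the image of N₂
  let φ : N₂ →* J ⧸ N₁.subgroupOf J :=
    (QuotientGroup.mk' (N₁.subgroupOf J)).comp (Subgroup.inclusion (le_sup_right : N₂ ≤ J))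
  have hφ : Function.Surjective φ := by
    intro q
    obtain ⟨j, rfl⟩ := QuotientGroup.mk'_surjective (N₁.subgroupOf J) q
    have hj : (j : H) ∈ N₁ ⊔ N₂ := j.2
    rw [← SetLike.mem_coe, Subgroup.normal_mul] at hj
    obtain ⟨a, ha, b, hb, hab⟩ := hj
    have hab' : a * b = (j : H) := hab
    have hbJ : b ∈ J := (le_sup_right : N₂ ≤ J) hb
    refine ⟨⟨b, hb⟩, ?_⟩
    have hmem : (((⟨b, hbJ⟩ : J)⁻¹ * j : J) : H) ∈ N₁ := by
      have hconj : b⁻¹ * a * b ∈ N₁ := by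
        have := h₁.conj_mem a ha b⁻¹
        simpa [mul_assoc] using this
      have : ((((⟨b, hbJ⟩ : J)⁻¹ * j : J)) : H) = b⁻¹ * (a * b) := by
        simp [← hab']
      rw [this, ← mul_assoc]
      exact hconj
    have : (QuotientGroup.mk' (N₁.subgroupOf J)) ⟨b, hbJ⟩ =
        (QuotientGroup.mk' (N₁.subgroupOf J)) j := by
      rw [QuotientGroup.mk'_eq_mk']
      exact ⟨(⟨b, hbJ⟩ : J)⁻¹ * j, Subgroup.mem_subgroupOf.mpr hmem, by simp⟩
    exact this
  haveI : Group.IsSolvable (J ⧸ N₁.subgroupOf J) := solvable_of_surjective hφ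
  exact solvable_of_ker_le_range (N₁.subgroupOf J).subtype
    (QuotientGroup.mk' (N₁.subgroupOf J))
    (by rw [QuotientGroup.ker_mk', Subgroup.range_subtype])

/-- A finite set contained in a directed union is contained in one member. -/
lemma finset_subset_of_directed {ι : Type*} [Nonempty ι] {f : ι → Subgroup H}
    (hdir : Directed (· ≤ ·) f) (t : Finset H) (ht : ∀ y ∈ t, ∃ i, y ∈ f i) :
    ∃ i, ∀ y ∈ t, y ∈ f i := by
  classical
  induction t using Finset.induction_on with
  | empty => exact ⟨Classical.arbitrary ι, by simp⟩
  | @insert a u hnotmem ih =>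
    obtain ⟨i, hi⟩ := ih (fun y hy => ht y (Finset.mem_insert_of_mem hy))
    obtain ⟨j, hj⟩ := ht a (Finset.mem_insert_self a u)
    obtain ⟨k, hik, hjk⟩ := hdir i j
    refine ⟨k, fun y hy => ?_⟩
    rcases Finset.mem_insert.mp hy with rfl | hy
    · exact hjk hj
    · exact hik (hi y hy)

end Main

/-- A locally finite group in which every solvable subgroup has derived length at most `d`
has a unique maximal normal locally solvable subgroup, which is moreover solvable of derived
length at most `d`. -/
theorem stmt_13 {H : Type*} [Group H] (d : ℕ)
    (hLF : ∀ s : Finset H, Finite (Subgroup.closure (s : Set H)))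
    (hcon : ∀ S : Subgroup H, IsSolvable S → derivedSeries S d = ⊥) :
    ∃! R : Subgroup H,
      R.Normal ∧ IsLocallySolvable R ∧
      (∀ R' : Subgroup H, R'.Normal → IsLocallySolvable R' → R' ≤ R) ∧
      IsSolvable R ∧ derivedSeries R d = ⊥ := by
  classical
  set S : Set (Subgroup H) := {N | N.Normal ∧ IsLocallySolvable N} with hS
  have hbotS : (⊥ : Subgroup H) ∈ S := by
    refine ⟨inferInstance, ?_⟩
    intro s
    exact (inferInstance : Group.IsSolvable (Subgroup.closure (s : Set (⊥ : Subgroup H))))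
  haveI : Nonempty S := ⟨⟨⊥, hbotS⟩⟩
  have hsolv : ∀ N ∈ S, IsSolvable ↥N := by
    intro N hN
    exact ⟨⟨d, locallySolvable_derivedSeries d hcon N hN.2⟩⟩
  have hdirS : ∀ N₁ ∈ S, ∀ N₂ ∈ S, N₁ ⊔ N₂ ∈ S := by
    intro N₁ h₁ N₂ h₂
    have hsol : IsSolvable ↥(N₁ ⊔ N₂) :=
      isSolvable_sup h₁.1 h₂.1 (hsolv N₁ h₁) (hsolv N₂ h₂)
    haveI := h₁.1; haveI := h₂.1
    exact ⟨inferInstance, hsol.isLocallySolvable⟩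
  have hdir : Directed (· ≤ ·) (fun i : S => (i : Subgroup H)) := by
    intro i j
    exact ⟨⟨i ⊔ j, hdirS _ i.2 _ j.2⟩, le_sup_left, le_sup_right⟩
  set R : Subgroup H := ⨆ i : S, (i : Subgroup H) with hR
  have hmemR : ∀ x : H, x ∈ R ↔ ∃ i : S, x ∈ (i : Subgroup H) := fun x =>
    Subgroup.mem_iSup_of_directed hdir
  have hRnormal : R.Normal := by
    constructor
    intro x hx g
    rw [hmemR] at hx ⊢
    obtain ⟨i, hi⟩ := hx
    exact ⟨i, i.2.1.conj_mem x hi g⟩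
  have hRls : IsLocallySolvable R := by
    intro s
    set t : Finset H := s.image Subtype.val with ht
    have htR : ∀ y ∈ t, ∃ i : S, y ∈ (i : Subgroup H) := by
      intro y hy
      rw [ht] at hy
      obtain ⟨z, -, hzy⟩ := Finset.mem_image.mp hy
      rw [← hzy]
      exact (hmemR _).mp z.2
    obtain ⟨i, hi⟩ := finset_subset_of_directed hdir t htR
    have hle : Subgroup.closure (t : Set H) ≤ (i : Subgroup H) := by
      rw [Subgroup.closure_le]
      intro y hy
      exact hi y (by exact_mod_cast hy)
    haveI : Group.IsSolvable ↥(i : Subgroup H) := hsolv _ i.2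
    haveI hclos : Group.IsSolvable ↥(Subgroup.closure (t : Set H)) := by
      have e := Subgroup.subgroupOfEquivOfLe hle
      exact solvable_of_surjective (f := e.toMonoidHom) e.surjective
    have hmapeq : (Subgroup.closure (s : Set ↥R)).map R.subtype
        = Subgroup.closure (t : Set H) := by
      rw [MonoidHom.map_closure]
      congr 1
      ext y
      simp [ht]
    let e : Subgroup.closure (s : Set ↥R) ≃*
        ((Subgroup.closure (s : Set ↥R)).map R.subtype : Subgroup H) :=
      Subgroup.equivMapOfInjective _ R.subtype R.subtype_injective
    haveI : Group.IsSolvable ↥((Subgroup.closure (s : Set ↥R)).map R.subtype) := by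
      rw [hmapeq]; exact hclos
    exact solvable_of_solvable_injective (f := e.toMonoidHom) e.injective
  have hRbot : derivedSeries R d = ⊥ := locallySolvable_derivedSeries d hcon R hRls
  have hRmax : ∀ R' : Subgroup H, R'.Normal → IsLocallySolvable R' → R' ≤ R := by
    intro R' hn hls
    exact le_iSup (fun i : S => (i : Subgroup H)) ⟨R', hn, hls⟩
  refine ⟨R, ⟨hRnormal, hRls, hRmax, ⟨⟨d, hRbot⟩⟩, hRbot⟩, ?_⟩
  rintro R' ⟨hn', hls', hmax', _, _⟩
  exact le_antisymm (hRmax R' hn' hls') (hmax' R hRnormal hRls)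
end
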